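/- Let F be a smooth manifold (boundaryless, modeled on a finite-dimensional real vector space) and let h : ℝ × F → F be a smooth map with h(1, x) = x and h(t, h(s, x)) = h(t·s, x) for all t, s ∈ ℝ and x ∈ F (a homogeneity structure). Suppose f : F → ℝ is a smooth function, not identically zero, and w ∈ ℝ is such that f(h(t, x)) = t^w · f(x) for all t > 0 and all x ∈ F. Then w is a nonnegative integer. -/

import Mathlib

open scoped Manifold

open Filter Real

/-- Auxiliary: a smooth function on `ℝ` that equals `c * t ^ w` (with `c ≠ 0`) on
`(0, ∞)` forces `w` to be a nonnegative integer. Induction on a natural bound on `w`. -/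
lemma aux_rpow_smooth : ∀ n : ℕ, ∀ w : ℝ, w < n → ∀ g : ℝ → ℝ, ContDiff ℝ ((⊤ : ℕ∞) : WithTop ℕ∞) g →
    ∀ c : ℝ, c ≠ 0 → (∀ t : ℝ, 0 < t → g t = c * t ^ w) → ∃ m : ℕ, w = m := by
  intro n
  induction n with
  | zero =>
    intro w hw g hg c hc heq
    exfalso
    have hw0 : w < 0 := by exact_mod_cast hw
    have h1 : Tendsto (fun t : ℝ => |g t|) (nhdsWithin 0 (Set.Ioi 0)) (nhds |g 0|) :=
      ((hg.continuous.abs.continuousAt (x := 0)).continuousWithinAt).tendsto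
    have h2 : Tendsto (fun t : ℝ => |g t|) (nhdsWithin 0 (Set.Ioi 0)) atTop := by
      have hexp : Tendsto (fun t : ℝ => |c| * Real.exp (Real.log t * w))
          (nhdsWithin 0 (Set.Ioi 0)) atTop := by
        refine Tendsto.const_mul_atTop (abs_pos.mpr hc) ?_
        exact Real.tendsto_exp_atTop.comp
          (Real.tendsto_log_nhdsGT_zero.atBot_mul_const_of_neg hw0)
      refine hexp.congr' ?_
      filter_upwards [self_mem_nhdsWithin] with t ht
      have ht' : (0:ℝ) < t := ht
      rw [← Real.rpow_def_of_pos ht', heq t ht', abs_mul,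
        abs_of_nonneg (Real.rpow_nonneg ht'.le w)]
    exact not_tendsto_nhds_of_tendsto_atTop h2 _ h1
  | succ n ih =>
    intro w hw g hg c hc heq
    rcases eq_or_ne w 0 with h0 | h0
    · exact ⟨0, by simp [h0]⟩
    · have hder : ∀ t : ℝ, 0 < t → deriv g t = (c * w) * t ^ (w - 1) := by
        intro t ht
        have hev : g =ᶠ[nhds t] fun s => c * s ^ w := by
          filter_upwards [Ioi_mem_nhds ht] with s hs
          exact heq s hs
        rw [hev.deriv_eq]
        rw [deriv_const_mul _ (by
          exact (Real.differentiableAt_rpow_const_of_ne w ht.ne'))]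
        rw [Real.deriv_rpow_const]
        ring
      have hg' : ContDiff ℝ ((⊤ : ℕ∞) : WithTop ℕ∞) (deriv g) := (contDiff_infty_iff_deriv.mp hg).2
      obtain ⟨m, hm⟩ := ih (w - 1) (by have hw2 := hw; push_cast at hw2 ⊢; linarith) (deriv g) hg' (c * w)
        (mul_ne_zero hc h0) hder
      exact ⟨m + 1, by push_cast; linarith⟩

/-- Let `F` be a smooth (boundaryless) manifold modeled on a
finite-dimensional real vector space `E` and let `h : ℝ × F → F` be a smooth action of
the multiplicative monoid `(ℝ, ·)` (a homogeneity structure): `h 1 x = x` and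
`h t (h s x) = h (t * s) x`. If `f : F → ℝ` is a smooth function, not identically zero,
and `w ∈ ℝ` satisfies `f (h t x) = t ^ w * f x` for all `t > 0` and all `x`, then `w`
is a nonnegative integer. -/
theorem homogeneous_function_degree_is_nat
    {E : Type*} [NormedAddCommGroup E] [NormedSpace ℝ E] [FiniteDimensional ℝ E]
    {F : Type*} [TopologicalSpace F] [ChartedSpace E F]
    [IsManifold (modelWithCornersSelf ℝ E) (⊤ : ℕ∞) F]
    (h : ℝ × F → F)
    (hsmooth : ContMDiff ((modelWithCornersSelf ℝ ℝ).prod (modelWithCornersSelf ℝ E))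
      (modelWithCornersSelf ℝ E) (⊤ : ℕ∞) h)
    (hone : ∀ x : F, h (1, x) = x)
    (hact : ∀ (t s : ℝ) (x : F), h (t, h (s, x)) = h (t * s, x))
    (f : F → ℝ)
    (hf : ContMDiff (modelWithCornersSelf ℝ E) (modelWithCornersSelf ℝ ℝ) (⊤ : ℕ∞) f)
    (hf0 : ∃ x : F, f x ≠ 0)
    (w : ℝ)
    (hhom : ∀ (t : ℝ), 0 < t → ∀ x : F, f (h (t, x)) = t ^ w * f x) :
    ∃ n : ℕ, w = n := by
  obtain ⟨x, hx⟩ := hf0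
  set g : ℝ → ℝ := fun t => f (h (t, x)) with hg_def
  have hγ : ContMDiff (modelWithCornersSelf ℝ ℝ)
      ((modelWithCornersSelf ℝ ℝ).prod (modelWithCornersSelf ℝ E)) (⊤ : ℕ∞)
      (fun t : ℝ => ((t, x) : ℝ × F)) :=
    contMDiff_id.prodMk contMDiff_const
  have hgsmooth : ContDiff ℝ ((⊤ : ℕ∞) : WithTop ℕ∞) g :=
    contMDiff_iff_contDiff.mp (hf.comp (hsmooth.comp hγ))
  have heq : ∀ t : ℝ, 0 < t → g t = f x * t ^ w := by
    intro t ht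
    rw [hg_def]
    simp only
    rw [hhom t ht x, mul_comm]
  exact aux_rpow_smooth (⌈w⌉₊ + 1) w
    (by push_cast; exact lt_of_le_of_lt (Nat.le_ceil w) (by linarith)) g hgsmooth
    (f x) hx heq
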